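/- Let λ be a regular uncountable cardinal and let c : [λ]² → 2 be a coloring such that: (i) there exist functions d_α : 𝒫_fin(α) → ω for α < λ with the property that whenever (s_i)_{i∈I} is a family of finite 1-homogeneous subsets of α with d_α constant on the family, ⋃_i s_i is 1-homogeneous; and (ii) for every u ∈ [λ]^{<ω}, the set {η < λ : c({ξ,η}) = 1 for all ξ ∈ u} is unbounded in λ. Let Q := {u ∈ [λ]^{<ω} : u is 1-homogeneous}, ordered by reverse inclusion. Then: (a) Q is the increasing union of λ many centered subsets, namely Q^α := Q ∩ [α]^{<ω} is centered via d_α; (b) for each α < λ the set D_α := {u ∈ Q : u ⊄ α} is open dense in Q; (c) if additionally there is no 1-homogeneous subset of λ of size λ, then no filter on Q meets all D_α (α < λ). -/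

import Mathlib

open Cardinal

def DenseIn {α : Type*} (le : α → α → Prop) (D : Set α) : Prop :=
  ∀ p, ∃ d ∈ D, le d p

def IsFilterIn {α : Type*} (le : α → α → Prop) (G : Set α) : Prop :=
  G.Nonempty ∧ (∀ p ∈ G, ∀ q, le p q → q ∈ G) ∧
    ∀ p ∈ G, ∀ q ∈ G, ∃ r ∈ G, le r p ∧ le r q

/-- `S` is 1-homogeneous with respect to the (total) coloring `c`. -/
def HomogS (c : Ordinal → Ordinal → Fin 2) (S : Set Ordinal) : Prop :=
  ∀ x ∈ S, ∀ y ∈ S, x ≠ y → c x y = 1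

/-- The poset `Q` of finite 1-homogeneous subsets of λ, ordered by ⊇. -/
def QH (lam : Cardinal) (c : Ordinal → Ordinal → Fin 2) :=
  {u : Finset Ordinal // (∀ x ∈ u, x < lam.ord) ∧ HomogS c ↑u}

def qhLe {lam : Cardinal} {c : Ordinal → Ordinal → Fin 2}
    (q p : QH lam c) : Prop := p.1 ⊆ q.1

theorem stmt12 (lam : Cardinal) (hreg : lam.IsRegular) (hunc : ℵ₀ < lam)
    (c : Ordinal → Ordinal → Fin 2) (hsymm : ∀ x y, c x y = c y x)
    (d : Ordinal → Finset Ordinal → ℕ)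
    (hi : ∀ α < lam.ord, ∀ (I : Type) (s : I → Finset Ordinal),
      (∀ i, ∀ x ∈ s i, x < α) → (∀ i, HomogS c ↑(s i)) →
      (∀ i j, d α (s i) = d α (s j)) → HomogS c (⋃ i, ↑(s i)))
    (hii : ∀ u : Finset Ordinal, (∀ x ∈ u, x < lam.ord) →
      ∀ β < lam.ord, ∃ e, β ≤ e ∧ e < lam.ord ∧ ∀ ξ ∈ u, c ξ e = 1) :
    -- (a) Q is the increasing union of λ many centered pieces Q^α,
    --     each centered via the function d_α:
    ((∀ q : QH lam c, ∃ α < lam.ord, ∀ x ∈ q.1, x < α) ∧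
     (∀ α < lam.ord, ∀ s : Finset (QH lam c),
        (∀ q ∈ s, ∀ x ∈ q.1, x < α) →
        (∀ q ∈ s, ∀ q' ∈ s, d α q.1 = d α q'.1) →
        ∃ r : QH lam c, ∀ q ∈ s, qhLe r q)) ∧
    -- (b) each D_α = {u ∈ Q : u ⊄ α} is open dense:
    (∀ α < lam.ord,
      DenseIn (qhLe (lam := lam) (c := c)) {q : QH lam c | ¬ ∀ x ∈ q.1, x < α} ∧
      (∀ q : QH lam c, (¬ ∀ x ∈ q.1, x < α) → ∀ r, qhLe r q → ¬ ∀ x ∈ r.1, x < α)) ∧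
    -- (c) if there is no 1-homogeneous subset of λ of size λ, then no filter
    --     meets all the D_α:
    ((¬ ∃ S : Set Ordinal, S ⊆ Set.Iio lam.ord ∧ #S = Cardinal.lift.{1,0} lam ∧
        HomogS c S) →
      ¬ ∃ G : Set (QH lam c), IsFilterIn (qhLe (lam := lam) (c := c)) G ∧
        ∀ α < lam.ord, ∃ q ∈ G, ¬ ∀ x ∈ q.1, x < α) := by
  have hlim : Order.IsSuccLimit lam.ord := Cardinal.isSuccLimit_ord hreg.aleph0_le
  refine ⟨⟨?_, ?_⟩, ?_, ?_⟩
  · -- every condition is bounded below λ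
    intro q
    refine ⟨Order.succ (q.1.sup id), ?_, ?_⟩
    · refine hlim.succ_lt ?_
      rcases q.1.eq_empty_or_nonempty with h | h
      · simp [h, hlim.pos]
      · obtain ⟨x, hx, hx2⟩ := Finset.exists_mem_eq_sup q.1 h id
        rw [hx2]; exact q.2.1 x hx
    · intro x hx
      exact lt_of_le_of_lt (Finset.le_sup (f := id) hx) (Order.lt_succ _)
  · -- centering
    intro α hα s hbound hd
    classical
    set r : Finset Ordinal := s.sup (fun q => q.1) with hr
    have hmem : ∀ x ∈ r, ∃ q ∈ s, x ∈ q.1 := by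
      intro x hx
      rwa [hr, Finset.mem_sup] at hx
    have hhom : HomogS c ↑r := by
      have key := hi α hα (Fin s.card)
        (fun i => ((s.equivFin.symm i : {q // q ∈ s}) : QH lam c).1)
        (fun i => hbound _ (s.equivFin.symm i).2)
        (fun i => ((s.equivFin.symm i : {q // q ∈ s}) : QH lam c).2.2)
        (fun i j => hd _ (s.equivFin.symm i).2 _ (s.equivFin.symm j).2)
      intro x hx y hy hxy
      have hxm : x ∈ ⋃ i, (↑(((s.equivFin.symm i : {q // q ∈ s}) : QH lam c).1) :
          Set Ordinal) := by
        obtain ⟨q, hq, hxq⟩ := hmem x hx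
        refine Set.mem_iUnion.2 ⟨s.equivFin ⟨q, hq⟩, ?_⟩
        simpa using hxq
      have hym : y ∈ ⋃ i, (↑(((s.equivFin.symm i : {q // q ∈ s}) : QH lam c).1) :
          Set Ordinal) := by
        obtain ⟨q, hq, hyq⟩ := hmem y hy
        refine Set.mem_iUnion.2 ⟨s.equivFin ⟨q, hq⟩, ?_⟩
        simpa using hyq
      exact key x hxm y hym hxy
    refine ⟨⟨r, ?_, hhom⟩, ?_⟩
    · intro x hx
      obtain ⟨q, hq, hxq⟩ := hmem x hx
      exact lt_trans (hbound q hq x hxq) hα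
    · intro q hq
      exact Finset.le_sup (f := fun q : QH lam c => q.1) hq
  · -- density and openness
    intro α hα
    constructor
    · intro p
      obtain ⟨e, he1, he2, he3⟩ := hii p.1 p.2.1 α hα
      classical
      refine ⟨⟨insert e p.1, ?_, ?_⟩, ?_, ?_⟩
      · intro x hx
        rcases Finset.mem_insert.1 hx with rfl | hx
        · exact he2
        · exact p.2.1 x hx
      · intro x hx y hy hxy
        simp only [Finset.coe_insert, Set.mem_insert_iff, Finset.mem_coe] at hx hy
        rcases hx with rfl | hx
        · rcases hy with rfl | hy
          · exact absurd rfl hxy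
          · rw [hsymm]; exact he3 y hy
        · rcases hy with rfl | hy
          · exact he3 x hx
          · exact p.2.2 x (by exact hx) y (by exact hy) hxy
      · intro hall
        exact absurd (hall e (Finset.mem_insert_self _ _)) (not_lt.2 he1)
      · exact Finset.subset_insert _ _
    · intro q hq r hrq hall
      exact hq (fun x hx => hall x (hrq hx))
  · -- (c)
    rintro hno ⟨G, hG, hD⟩
    apply hno
    set S : Set Ordinal := {x | ∃ q ∈ G, x ∈ q.1} with hS
    have hsub : S ⊆ Set.Iio lam.ord := by
      rintro x ⟨q, _, hxq⟩
      exact q.2.1 x hxq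
    have hub : ∀ α < lam.ord, ∃ x ∈ S, α ≤ x := by
      intro α hα
      obtain ⟨q, hqG, hq⟩ := hD α hα
      push_neg at hq
      obtain ⟨x, hxq, hx⟩ := hq
      exact ⟨x, ⟨q, hqG, hxq⟩, hx⟩
    have hhom : HomogS c S := by
      rintro x ⟨q1, hq1, hx1⟩ y ⟨q2, hq2, hy2⟩ hxy
      obtain ⟨r, hrG, hr1, hr2⟩ := hG.2.2 q1 hq1 q2 hq2
      exact r.2.2 x (hr1 hx1) y (hr2 hy2) hxy
    refine ⟨S, hsub, ?_, hhom⟩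
    have hle : #S ≤ Cardinal.lift.{1,0} lam := by
      calc #S ≤ #(Set.Iio lam.ord) := Cardinal.mk_le_mk_of_subset hsub
        _ = Cardinal.lift.{1,0} lam := by
          rw [Ordinal.mk_Iio_ordinal, Cardinal.card_ord]
    by_contra hne
    have hlt : #S < Cardinal.lift.{1,0} lam := lt_of_le_of_ne hle hne
    have huniv : #S < Cardinal.univ.{0,1} := hlt.trans (Cardinal.lift_lt_univ lam)
    obtain ⟨c₀, hc₀⟩ := Cardinal.lt_univ.1 huniv
    have hmk : #S = #(ULift.{1,0} c₀.out) := by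
      rw [Cardinal.mk_uLift, Cardinal.mk_out, hc₀]
    obtain ⟨e⟩ := Cardinal.eq.1 hmk
    set f : c₀.out → Ordinal := fun b => ((e.symm ⟨b⟩ : ↥S) : Ordinal) with hf
    have hcard : #c₀.out < lam := by
      rw [Cardinal.mk_out]
      exact Cardinal.lift_lt.1 (hc₀ ▸ hlt)
    have hsup : (⨆ b, f b) < lam.ord :=
      Cardinal.iSup_lt_ord_of_isRegular hreg hcard (fun b => hsub (e.symm ⟨b⟩).2)
    obtain ⟨x, hxS, hx⟩ := hub (Order.succ (⨆ b, f b)) (hlim.succ_lt hsup)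
    have hxle : x ≤ ⨆ b, f b := by
      have hx' : f (e ⟨x, hxS⟩).down = x := by
        have h1 : (⟨(e ⟨x, hxS⟩).down⟩ : ULift.{1,0} c₀.out) = e ⟨x, hxS⟩ := rfl
        simp only [hf, h1, Equiv.symm_apply_apply]
      calc x = f (e ⟨x, hxS⟩).down := hx'.symm
        _ ≤ ⨆ b, f b := le_ciSup (Ordinal.bddAbove_range f) _
    exact absurd (Order.succ_le_iff.1 hx) (not_lt.2 hxle)
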